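/- In the semilinear stratification setting: let K, K' ⊆ I and L, L' ⊆ J be such that σ_{K,L} ≠ ∅ and σ_{K',L'} ≠ ∅. Then the following three conditions are equivalent: (i) σ_{K',L'} ⊆ cl(σ_{K,L}); (ii) σ_{K',L'} ∩ cl(σ_{K,L}) ≠ ∅; (iii) K ⊆ K' and L ⊆ L'; where cl denotes closure in ℝ^S. (Equivalence (4.4) established in the proof of Lemma 4.7.) -/

import Mathlib

/-- The negative part `|t|_- = max(-t, 0)` of a real number. -/
def negPartR (t : ℝ) : ℝ := max (-t) 0

/-- `α(u) = max( max_{i∈I} |u_i| , max_{j∈J} |u_j|_- )` (both inner maxima padded by `0`,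
which is harmless since all terms are nonnegative). -/
noncomputable def alphaFn {ι : Type*} (I J : Finset ι) (u : ι → ℝ) : ℝ :=
  max (I.fold max 0 fun i => |u i|) (J.fold max 0 fun j => negPartR (u j))

/-- `Ω = ⋃_{i∈I} {u : u_i ≠ 0} ∪ ⋃_{j∈J} {u : u_j < 0}`. -/
def OmegaSet {ι : Type*} (I J : Finset ι) : Set (ι → ℝ) :=
  {u | (∃ i ∈ I, u i ≠ 0) ∨ (∃ j ∈ J, u j < 0)}

/-- The stratum `σ_{K,L}`. -/
noncomputable def sigmaSet {ι : Type*} (I J K L : Finset ι) : Set (ι → ℝ) :=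
  {u | u ∈ OmegaSet I J ∧ (∀ i ∈ I, (i ∈ K ↔ alphaFn I J u = |u i|)) ∧
    (∀ j ∈ J, (j ∈ L ↔ alphaFn I J u = negPartR (u j)))}

namespace SigmaAux

variable {ι : Type*}

lemma negPartR_nonneg (t : ℝ) : 0 ≤ negPartR t := le_max_right _ _

lemma negPartR_pos_iff {t : ℝ} : 0 < negPartR t ↔ t < 0 := by
  simp [negPartR, lt_max_iff]

lemma abs_eq_negPartR_of_neg {t : ℝ} (h : t < 0) : |t| = negPartR t := by
  rw [abs_of_neg h, negPartR, max_eq_left (by linarith)]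

lemma negPartR_smul {c t : ℝ} (hc : 0 ≤ c) : negPartR (c * t) = c * negPartR t := by
  rcases le_total t 0 with h | h
  · rw [show negPartR t = -t from max_eq_left (by linarith),
      show negPartR (c * t) = -(c * t) from max_eq_left (by nlinarith)]
    ring
  · rw [show negPartR t = 0 from max_eq_right (by linarith),
      show negPartR (c * t) = 0 from max_eq_right (by nlinarith)]
    ring

lemma fold_max_cases [DecidableEq ι] (s : Finset ι) (f : ι → ℝ) :
    s.fold max 0 f = 0 ∨ ∃ i ∈ s, s.fold max 0 f = f i := by
  induction s using Finset.induction_on with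
  | empty => left; rfl
  | @insert a s ha ih =>
    rw [Finset.fold_insert ha]
    rcases max_choice (f a) (s.fold max 0 f) with h1 | h1
    · exact Or.inr ⟨a, Finset.mem_insert_self a s, h1⟩
    · rw [h1]
      rcases ih with h2 | ⟨i, hi, h2⟩
      · exact Or.inl h2
      · exact Or.inr ⟨i, Finset.mem_insert_of_mem hi, h2⟩

lemma fold_max_continuous {X : Type*} [TopologicalSpace X] [DecidableEq ι]
    (s : Finset ι) (f : ι → X → ℝ) (hf : ∀ i, Continuous (f i)) :
    Continuous fun x => s.fold max 0 fun i => f i x := by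
  induction s using Finset.induction_on with
  | empty => simpa using continuous_const
  | @insert a s ha ih =>
    simp only [Finset.fold_insert ha]
    exact (hf a).max ih

variable (I J : Finset ι) (u : ι → ℝ)

lemma alpha_nonneg : 0 ≤ alphaFn I J u :=
  le_trans ((Finset.le_fold_max _).mpr (Or.inl le_rfl)) (le_max_left _ _)

lemma abs_le_alpha {i : ι} (hi : i ∈ I) : |u i| ≤ alphaFn I J u :=
  le_trans ((Finset.le_fold_max _).mpr (Or.inr ⟨i, hi, le_rfl⟩)) (le_max_left _ _)

lemma negPart_le_alpha {j : ι} (hj : j ∈ J) : negPartR (u j) ≤ alphaFn I J u :=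
  le_trans ((Finset.le_fold_max _).mpr (Or.inr ⟨j, hj, le_rfl⟩)) (le_max_right _ _)

lemma alpha_le {c : ℝ} (hc : 0 ≤ c) (h1 : ∀ i ∈ I, |u i| ≤ c)
    (h2 : ∀ j ∈ J, negPartR (u j) ≤ c) : alphaFn I J u ≤ c :=
  max_le ((Finset.fold_max_le _).mpr ⟨hc, h1⟩) ((Finset.fold_max_le _).mpr ⟨hc, h2⟩)

lemma alpha_attained [DecidableEq ι] (h : 0 < alphaFn I J u) :
    (∃ i ∈ I, alphaFn I J u = |u i|) ∨ ∃ j ∈ J, alphaFn I J u = negPartR (u j) := by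
  unfold alphaFn at *
  rcases max_choice (I.fold max 0 fun i => |u i|) (J.fold max 0 fun j => negPartR (u j)) with
    h1 | h1 <;> rw [h1] at h ⊢
  · rcases fold_max_cases I (fun i => |u i|) with h2 | ⟨i, hi, h2⟩
    · exact absurd h2 (ne_of_gt h)
    · exact Or.inl ⟨i, hi, h2⟩
  · rcases fold_max_cases J (fun j => negPartR (u j)) with h2 | ⟨j, hj, h2⟩
    · exact absurd h2 (ne_of_gt h)
    · exact Or.inr ⟨j, hj, h2⟩

lemma alpha_continuous [DecidableEq ι] : Continuous (alphaFn I J) :=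
  Continuous.max
    (fold_max_continuous I (fun i (u : ι → ℝ) => |u i|) fun i => (continuous_apply i).abs)
    (fold_max_continuous J (fun j (u : ι → ℝ) => negPartR (u j)) fun j =>
      ((continuous_apply j).neg.max continuous_const))

lemma mem_Omega_iff [DecidableEq ι] : u ∈ OmegaSet I J ↔ 0 < alphaFn I J u := by
  constructor
  · rintro (⟨i, hi, h⟩ | ⟨j, hj, h⟩)
    · exact lt_of_lt_of_le (abs_pos.mpr h) (abs_le_alpha I J u hi)
    · exact lt_of_lt_of_le (negPartR_pos_iff.mpr h) (negPart_le_alpha I J u hj)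
  · intro h
    rcases alpha_attained I J u h with ⟨i, hi, he⟩ | ⟨j, hj, he⟩
    · exact Or.inl ⟨i, hi, abs_pos.mp (he ▸ h)⟩
    · exact Or.inr ⟨j, hj, negPartR_pos_iff.mp (he ▸ h)⟩

end SigmaAux

/-- equivalence (4.4) in the proof of Lemma 4.7.  In the semilinear
stratification setting, for `K, K' ⊆ I` and `L, L' ⊆ J` with `σ_{K,L} ≠ ∅` and
`σ_{K',L'} ≠ ∅`, the conditions (i) `σ_{K',L'} ⊆ cl(σ_{K,L})`,
(ii) `σ_{K',L'} ∩ cl(σ_{K,L}) ≠ ∅`, and (iii) `K ⊆ K' ∧ L ⊆ L'` are equivalent. -/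


theorem sigmaSet_closure_tfae
    {ι : Type*} [Fintype ι] [DecidableEq ι] [Nonempty ι]
    (I J : Finset ι) (hIJ : Disjoint I J) (hIJunion : I ∪ J = Finset.univ)
    (K K' L L' : Finset ι) (hK : K ⊆ I) (hK' : K' ⊆ I) (hL : L ⊆ J) (hL' : L' ⊆ J)
    (hσ : (sigmaSet I J K L).Nonempty) (hσ' : (sigmaSet I J K' L').Nonempty) :
    (sigmaSet I J K' L' ⊆ closure (sigmaSet I J K L) ↔ (K ⊆ K' ∧ L ⊆ L')) ∧
    ((sigmaSet I J K' L' ∩ closure (sigmaSet I J K L)).Nonempty ↔ (K ⊆ K' ∧ L ⊆ L')) := by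
  open SigmaAux in
  have h31 : (K ⊆ K' ∧ L ⊆ L') → sigmaSet I J K' L' ⊆ closure (sigmaSet I J K L) := by
    rintro ⟨hKK, hLL⟩ u ⟨huΩ, huK, huL⟩
    set a := alphaFn I J u with ha
    have hapos : 0 < a := (mem_Omega_iff I J u).mp huΩ
    obtain ⟨w, hwΩ, hwK, hwL⟩ := hσ
    have hKL : K.Nonempty ∨ L.Nonempty := by
      have hw : 0 < alphaFn I J w := (mem_Omega_iff I J w).mp hwΩ
      rcases alpha_attained I J w hw with ⟨i, hi, he⟩ | ⟨j, hj, he⟩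
      · exact Or.inl ⟨i, (hwK i hi).mpr he⟩
      · exact Or.inr ⟨j, (hwL j hj).mpr he⟩
    rw [Metric.mem_closure_iff]
    intro ε hε
    set δ : ℝ := min (ε / (2 * (a + 1))) (1 / 2) with hδdef
    have hδ0 : 0 < δ := lt_min (by positivity) (by norm_num)
    have hδ1 : δ < 1 := lt_of_le_of_lt (min_le_right _ _) (by norm_num)
    set E : Finset ι := (K' \ K) ∪ (L' \ L) with hEdef
    set v : ι → ℝ := fun x => if x ∈ E then (1 - δ) * u x else u x with hv
    -- membership in E, restricted to I resp. J
    have hEI : ∀ i ∈ I, (i ∈ E ↔ i ∈ K' \ K) := by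
      intro i hi
      have hiL' : i ∉ L' := fun h => Finset.disjoint_left.mp hIJ hi (hL' h)
      simp only [hEdef, Finset.mem_union, Finset.mem_sdiff]
      tauto
    have hEJ : ∀ j ∈ J, (j ∈ E ↔ j ∈ L' \ L) := by
      intro j hj
      have hjK' : j ∉ K' := fun h => Finset.disjoint_right.mp hIJ hj (hK' h)
      simp only [hEdef, Finset.mem_union, Finset.mem_sdiff]
      tauto
    -- values of v
    have hvE : ∀ x ∈ E, v x = (1 - δ) * u x := by intro x hx; simp [hv, hx]
    have hvnE : ∀ x, x ∉ E → v x = u x := by intro x hx; simp [hv, hx]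
    have h1δ : (0:ℝ) ≤ 1 - δ := by linarith
    -- |u x| = a on E
    have huE : ∀ x ∈ E, |u x| = a := by
      intro x hx
      rcases Finset.mem_union.mp hx with hx' | hx'
      · exact ((huK x (hK' (Finset.mem_sdiff.mp hx').1)).mp (Finset.mem_sdiff.mp hx').1).symm
      · have hxL' := (Finset.mem_sdiff.mp hx').1
        have hnp : a = negPartR (u x) := (huL x (hL' hxL')).mp hxL'
        have hxneg : u x < 0 := negPartR_pos_iff.mp (hnp ▸ hapos)
        rw [abs_eq_negPartR_of_neg hxneg, ← hnp]
    -- alphaFn v = a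
    have hva : alphaFn I J v = a := by
      apply le_antisymm
      · apply alpha_le I J v hapos.le
        · intro i hi
          by_cases hiE : i ∈ E
          · rw [hvE i hiE, abs_mul, abs_of_nonneg h1δ, huE i hiE]
            nlinarith
          · rw [hvnE i hiE]; exact abs_le_alpha I J u hi
        · intro j hj
          by_cases hjE : j ∈ E
          · rw [hvE j hjE, negPartR_smul h1δ]
            have hjL' := (Finset.mem_sdiff.mp ((hEJ j hj).mp hjE)).1
            rw [← (huL j hj).mp hjL']
            nlinarith
          · rw [hvnE j hjE]; exact negPart_le_alpha I J u hj
      · rcases hKL with ⟨k, hk⟩ | ⟨l, hl⟩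
        · have hkI := hK hk
          have hkE : k ∉ E := fun h =>
            (Finset.mem_sdiff.mp ((hEI k hkI).mp h)).2 hk
          have : a = |v k| := by rw [hvnE k hkE]; exact (huK k hkI).mp (hKK hk)
          exact this ▸ abs_le_alpha I J v hkI
        · have hlJ := hL hl
          have hlE : l ∉ E := fun h =>
            (Finset.mem_sdiff.mp ((hEJ l hlJ).mp h)).2 hl
          have : a = negPartR (v l) := by rw [hvnE l hlE]; exact (huL l hlJ).mp (hLL hl)
          exact this ▸ negPart_le_alpha I J v hlJ
    refine ⟨v, ⟨?_, ?_, ?_⟩, ?_⟩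
    · exact (mem_Omega_iff I J v).mpr (hva ▸ hapos)
    · intro i hi
      rw [hva]
      constructor
      · intro hiK
        have hiE : i ∉ E := fun h => (Finset.mem_sdiff.mp ((hEI i hi).mp h)).2 hiK
        rw [hvnE i hiE]; exact (huK i hi).mp (hKK hiK)
      · intro hvi
        by_contra hiK
        by_cases hiE : i ∈ E
        · rw [hvE i hiE, abs_mul, abs_of_nonneg h1δ, huE i hiE] at hvi
          nlinarith
        · rw [hvnE i hiE] at hvi
          have hiK' : i ∈ K' := (huK i hi).mpr hvi
          exact hiE ((hEI i hi).mpr (Finset.mem_sdiff.mpr ⟨hiK', hiK⟩))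
    · intro j hj
      rw [hva]
      constructor
      · intro hjL
        have hjE : j ∉ E := fun h => (Finset.mem_sdiff.mp ((hEJ j hj).mp h)).2 hjL
        rw [hvnE j hjE]; exact (huL j hj).mp (hLL hjL)
      · intro hvj
        by_contra hjL
        by_cases hjE : j ∈ E
        · have hjL' := (Finset.mem_sdiff.mp ((hEJ j hj).mp hjE)).1
          rw [hvE j hjE, negPartR_smul h1δ, ← (huL j hj).mp hjL'] at hvj
          nlinarith
        · rw [hvnE j hjE] at hvj
          have hjL' : j ∈ L' := (huL j hj).mpr hvj
          exact hjE ((hEJ j hj).mpr (Finset.mem_sdiff.mpr ⟨hjL', hjL⟩))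
    · rw [dist_comm, dist_pi_lt_iff hε]
      intro x
      rw [Real.dist_eq]
      by_cases hxE : x ∈ E
      · rw [hvE x hxE]
        have : (1 - δ) * u x - u x = -δ * u x := by ring
        rw [this, abs_mul, abs_neg, abs_of_pos hδ0, huE x hxE]
        have hδle : δ ≤ ε / (2 * (a + 1)) := min_le_left _ _
        have h2a : (0:ℝ) < 2 * (a + 1) := by linarith
        rw [le_div_iff₀ h2a] at hδle
        nlinarith
      · rw [hvnE x hxE]; simpa using hε
  have h23 : (sigmaSet I J K' L' ∩ closure (sigmaSet I J K L)).Nonempty →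
      K ⊆ K' ∧ L ⊆ L' := by
    rintro ⟨u, ⟨huΩ, huK, huL⟩, hucl⟩
    constructor
    · intro i hiK
      have hiI := hK hiK
      have hclosed : IsClosed {v : ι → ℝ | alphaFn I J v = |v i|} :=
        isClosed_eq (alpha_continuous I J) ((continuous_apply i).abs)
      have hsub : sigmaSet I J K L ⊆ {v | alphaFn I J v = |v i|} := by
        rintro w ⟨_, hwK, _⟩; exact (hwK i hiI).mp hiK
      exact (huK i hiI).mpr ((closure_minimal hsub hclosed) hucl)
    · intro j hjL
      have hjJ := hL hjL
      have hclosed : IsClosed {v : ι → ℝ | alphaFn I J v = negPartR (v j)} :=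
        isClosed_eq (alpha_continuous I J) ((continuous_apply j).neg.max continuous_const)
      have hsub : sigmaSet I J K L ⊆ {v | alphaFn I J v = negPartR (v j)} := by
        rintro w ⟨_, _, hwL⟩; exact (hwL j hjJ).mp hjL
      exact (huL j hjJ).mpr ((closure_minimal hsub hclosed) hucl)
  obtain ⟨u', hu'⟩ := hσ'
  exact ⟨⟨fun h => h23 ⟨u', hu', h hu'⟩, fun h => h31 h⟩,
    ⟨h23, fun h => ⟨u', hu', h31 h hu'⟩⟩⟩
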